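/- Let k ≥ 2, T_1, …, T_k > 0, and 1 ≤ i ≤ n. The differential operator ζ^i = (1/(T_1 + ⋯ + T_k)) Σ_{α=1}^{k−1} T_α ∂/∂w_i^α (with Wirtinger derivatives) acts on G^{(k)} by ζ^i(G^{(k)}) = −((Σ_{α=1}^{k−1} \bar{w}_i^α)/(4 T_k)) · G^{(k)}, where \bar{w} denotes complex conjugation. -/

import Mathlib

open MeasureTheory

/-- The Gaussian `G_T(x,z) = (4πT)^{−(2n+m)/2} exp(−(|x|²+|z|²)/(4T))` on `ℝ^m × ℂ^n`. -/
noncomputable def gaussT (m n : ℕ) (T : ℝ) (p : (Fin m → ℝ) × (Fin n → ℂ)) : ℝ :=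
  (4 * Real.pi * T) ^ (-((2 * (n : ℝ) + (m : ℝ)) / 2)) *
    Real.exp (-(((∑ j, (p.1 j) ^ 2) + ∑ i, Complex.normSq (p.2 i)) / (4 * T)))

/-- The product Gaussian
`G^{(k)}(q¹,…,q^{k−1}) = (∏_{α=1}^{k−1} G_{T_α}(q^α)) · G_{T_k}(Σ_α q^α)`
on `(ℝ^m × ℂ^n)^{k−1}`. -/
noncomputable def gaussProd (m n k : ℕ) (hk : 0 < k) (T : Fin k → ℝ)
    (q : Fin (k - 1) → (Fin m → ℝ) × (Fin n → ℂ)) : ℝ :=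
  (∏ α, gaussT m n (T (Fin.castLE (Nat.sub_le k 1) α)) (q α)) *
    gaussT m n (T ⟨k - 1, Nat.sub_lt hk one_pos⟩) (∑ α, q α)

@[fun_prop] theorem aux_diff_re : Differentiable ℝ Complex.re := Complex.reCLM.differentiable
@[fun_prop] theorem aux_diff_im : Differentiable ℝ Complex.im := Complex.imCLM.differentiable

theorem gaussT_differentiable (m n : ℕ) (T : ℝ) : Differentiable ℝ (gaussT m n T) := by
  unfold gaussT
  simp only [Complex.normSq_apply]
  fun_prop

theorem gaussProd_differentiable (m n k : ℕ) (hk : 0 < k) (T : Fin k → ℝ) :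
    Differentiable ℝ (gaussProd m n k hk T) := by
  intro q
  unfold gaussProd
  apply DifferentiableAt.mul
  · exact (HasFDerivAt.finset_prod (fun β _ =>
      (((gaussT_differentiable m n _) _).comp q (by fun_prop)).hasFDerivAt)).differentiableAt
  · exact ((gaussT_differentiable m n _) _).comp q (by fun_prop)

theorem gaussT_line (m n : ℕ) (T : ℝ) (p : (Fin m → ℝ) × (Fin n → ℂ)) (i : Fin n) (c : ℂ)
    (t : ℝ) :
    gaussT m n T (p + t • ((0 : Fin m → ℝ), (Pi.single i c : Fin n → ℂ))) =
      gaussT m n T p *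
        Real.exp (-((2 * t * (p.2 i * (starRingEnd ℂ) c).re + t ^ 2 * Complex.normSq c)
          / (4 * T))) := by
  unfold gaussT
  have h1 : (p + t • ((0 : Fin m → ℝ), (Pi.single i c : Fin n → ℂ))).1 = p.1 := by simp
  have h2 : (p + t • ((0 : Fin m → ℝ), (Pi.single i c : Fin n → ℂ))).2
      = fun j => p.2 j + (t : ℂ) * (Pi.single i c : Fin n → ℂ) j := by
    funext j; simp [Complex.real_smul]
  rw [h1, h2]
  have key : ∀ j : Fin n, Complex.normSq (p.2 j + (t : ℂ) * (Pi.single i c : Fin n → ℂ) j)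
      = Complex.normSq (p.2 j) +
        (if j = i then 2 * t * (p.2 i * (starRingEnd ℂ) c).re + t ^ 2 * Complex.normSq c
          else 0) := by
    intro j
    by_cases hj : j = i
    · subst hj
      rw [Pi.single_eq_same, Complex.normSq_add, if_pos rfl, Complex.normSq_mul,
        Complex.normSq_ofReal, map_mul, Complex.conj_ofReal,
        show p.2 j * ((t : ℂ) * (starRingEnd ℂ) c) = (t : ℂ) * (p.2 j * (starRingEnd ℂ) c) by
          ring,
        Complex.mul_re, Complex.ofReal_re, Complex.ofReal_im]
      ring
    · rw [Pi.single_eq_of_ne hj, if_neg hj]; simp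
  simp only [key]
  rw [Finset.sum_add_distrib, Finset.sum_ite_eq' Finset.univ i, if_pos (Finset.mem_univ i)]
  rw [show -((∑ j, (p.1 j) ^ 2 + ((∑ j, Complex.normSq (p.2 j)) +
      (2 * t * (p.2 i * (starRingEnd ℂ) c).re + t ^ 2 * Complex.normSq c))) / (4 * T))
    = -((∑ j, (p.1 j) ^ 2 + ∑ j, Complex.normSq (p.2 j)) / (4 * T)) +
      -((2 * t * (p.2 i * (starRingEnd ℂ) c).re + t ^ 2 * Complex.normSq c) / (4 * T)) by
      ring, Real.exp_add]
  ring

theorem gaussProd_line (m n k : ℕ) (hk : 0 < k) (T : Fin k → ℝ)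
    (q : Fin (k - 1) → (Fin m → ℝ) × (Fin n → ℂ)) (α : Fin (k - 1)) (i : Fin n) (c : ℂ)
    (t : ℝ) :
    gaussProd m n k hk T (q + t • (Pi.single α ((0 : Fin m → ℝ), (Pi.single i c : Fin n → ℂ)) : Fin (k - 1) → (Fin m → ℝ) × (Fin n → ℂ))) =
      gaussProd m n k hk T q *
        (Real.exp (-((2 * t * ((q α).2 i * (starRingEnd ℂ) c).re + t ^ 2 * Complex.normSq c)
            / (4 * T (Fin.castLE (Nat.sub_le k 1) α)))) *
         Real.exp (-((2 * t * ((∑ β, q β).2 i * (starRingEnd ℂ) c).re + t ^ 2 * Complex.normSq c)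
            / (4 * T ⟨k - 1, Nat.sub_lt hk one_pos⟩)))) := by
  set v : (Fin m → ℝ) × (Fin n → ℂ) := ((0 : Fin m → ℝ), (Pi.single i c : Fin n → ℂ)) with hv
  have hupd : q + t • (Pi.single α v : Fin (k - 1) → (Fin m → ℝ) × (Fin n → ℂ)) = Function.update q α (q α + t • v) := by
    funext β
    by_cases hβ : β = α
    · subst hβ; simp
    · simp [Function.update_of_ne hβ, Pi.single_eq_of_ne hβ]
  unfold gaussProd
  rw [hupd, Finset.sum_update_of_mem (Finset.mem_univ α), add_right_comm,
    Finset.sdiff_singleton_eq_erase, Finset.add_sum_erase _ _ (Finset.mem_univ α), gaussT_line]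
  rw [← Finset.mul_prod_erase Finset.univ
    (fun β => gaussT m n (T (Fin.castLE (Nat.sub_le k 1) β)) (Function.update q α (q α + t • v) β))
    (Finset.mem_univ α),
    ← Finset.mul_prod_erase Finset.univ
    (fun β => gaussT m n (T (Fin.castLE (Nat.sub_le k 1) β)) (q β)) (Finset.mem_univ α)]
  simp only [Function.update_self]
  rw [Finset.prod_congr rfl (fun β hβ => by
    rw [Function.update_of_ne (Finset.ne_of_mem_erase hβ)]), gaussT_line]
  ring

theorem hasDerivAt_aux (G r₁ r₂ nc T₁ T₂ : ℝ) :
    HasDerivAt (fun t : ℝ => G * (Real.exp (-((2 * t * r₁ + t ^ 2 * nc) / (4 * T₁))) *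
        Real.exp (-((2 * t * r₂ + t ^ 2 * nc) / (4 * T₂)))))
      (G * (-(r₁ / (2 * T₁)) - r₂ / (2 * T₂))) 0 := by
  have hsq : HasDerivAt (fun t : ℝ => t ^ 2) 0 0 := by simpa using hasDerivAt_pow 2 (0 : ℝ)
  have hid : HasDerivAt (fun t : ℝ => t) 1 0 := hasDerivAt_id 0
  have h1 : HasDerivAt (fun t : ℝ =>
      -((2 * t * r₁ + t ^ 2 * nc) / (4 * T₁)) + -((2 * t * r₂ + t ^ 2 * nc) / (4 * T₂)))
      (-(r₁ / (2 * T₁)) - r₂ / (2 * T₂)) 0 := by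
    have heq : (fun t : ℝ =>
        -((2 * t * r₁ + t ^ 2 * nc) / (4 * T₁)) + -((2 * t * r₂ + t ^ 2 * nc) / (4 * T₂)))
        = fun t : ℝ => (-(2 * r₁ / (4 * T₁)) - 2 * r₂ / (4 * T₂)) * t +
            (-(nc / (4 * T₁)) - nc / (4 * T₂)) * t ^ 2 := by
      funext t; ring
    rw [heq]
    have h := (hid.const_mul (-(2 * r₁ / (4 * T₁)) - 2 * r₂ / (4 * T₂))).add
      (hsq.const_mul (-(nc / (4 * T₁)) - nc / (4 * T₂)))
    exact h.congr_deriv (by ring)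
  have h2 := (h1.exp).const_mul G
  have heq2 : (fun t : ℝ => G * (Real.exp (-((2 * t * r₁ + t ^ 2 * nc) / (4 * T₁))) *
      Real.exp (-((2 * t * r₂ + t ^ 2 * nc) / (4 * T₂))))) = fun t : ℝ =>
      G * Real.exp (-((2 * t * r₁ + t ^ 2 * nc) / (4 * T₁)) + -((2 * t * r₂ + t ^ 2 * nc) / (4 * T₂))) := by
    funext t; rw [Real.exp_add]
  rw [heq2]
  exact h2.congr_deriv (by norm_num)

theorem fderiv_gaussProd (m n k : ℕ) (hk : 0 < k) (T : Fin k → ℝ)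
    (q : Fin (k - 1) → (Fin m → ℝ) × (Fin n → ℂ)) (α : Fin (k - 1)) (i : Fin n) (c : ℂ) :
    fderiv ℝ (gaussProd m n k hk T) q
        (Pi.single α ((0 : Fin m → ℝ), (Pi.single i c : Fin n → ℂ)))
      = gaussProd m n k hk T q *
        (-(((q α).2 i * (starRingEnd ℂ) c).re / (2 * T (Fin.castLE (Nat.sub_le k 1) α)))
          - ((∑ β, q β).2 i * (starRingEnd ℂ) c).re / (2 * T ⟨k - 1, Nat.sub_lt hk one_pos⟩)) := by
  set v : Fin (k - 1) → (Fin m → ℝ) × (Fin n → ℂ) :=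
    Pi.single α ((0 : Fin m → ℝ), (Pi.single i c : Fin n → ℂ)) with hv
  have hdiff : DifferentiableAt ℝ (gaussProd m n k hk T) q :=
    (gaussProd_differentiable m n k hk T) q
  have hline : HasDerivAt (fun t : ℝ => q + t • v) v 0 := by
    simpa using ((hasDerivAt_id (0 : ℝ)).smul_const v).const_add q
  have h0 : q + (0 : ℝ) • v = q := by simp
  have hcomp : HasDerivAt (fun t : ℝ => gaussProd m n k hk T (q + t • v))
      (fderiv ℝ (gaussProd m n k hk T) q v) 0 := by
    have := hdiff.hasFDerivAt.comp_hasDerivAt_of_eq (0 : ℝ) hline h0.symm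
    exact this
  have hval : HasDerivAt (fun t : ℝ => gaussProd m n k hk T (q + t • v))
      (gaussProd m n k hk T q *
        (-(((q α).2 i * (starRingEnd ℂ) c).re / (2 * T (Fin.castLE (Nat.sub_le k 1) α)))
          - ((∑ β, q β).2 i * (starRingEnd ℂ) c).re / (2 * T ⟨k - 1, Nat.sub_lt hk one_pos⟩))) 0 := by
    have heq : (fun t : ℝ => gaussProd m n k hk T (q + t • v)) = fun t : ℝ =>
        gaussProd m n k hk T q *
          (Real.exp (-((2 * t * ((q α).2 i * (starRingEnd ℂ) c).re + t ^ 2 * Complex.normSq c)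
              / (4 * T (Fin.castLE (Nat.sub_le k 1) α)))) *
           Real.exp (-((2 * t * ((∑ β, q β).2 i * (starRingEnd ℂ) c).re + t ^ 2 * Complex.normSq c)
              / (4 * T ⟨k - 1, Nat.sub_lt hk one_pos⟩)))) :=
      funext fun t => gaussProd_line m n k hk T q α i c t
    rw [heq]
    exact hasDerivAt_aux _ _ _ _ _ _
  exact hcomp.unique hval

/-- The Wirtinger derivative `∂F/∂w_i^α = (1/2)(∂F/∂u_i^α − i ∂F/∂v_i^α)` of a
real-valued function `F` on `(ℝ^m × ℂ^n)^{k−1}` in the complex coordinate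
`w_i^α = u_i^α + i v_i^α`, expressed via directional (Fréchet) derivatives. -/
noncomputable def wirtingerDeriv (m n k : ℕ)
    (F : (Fin (k - 1) → (Fin m → ℝ) × (Fin n → ℂ)) → ℝ)
    (q : Fin (k - 1) → (Fin m → ℝ) × (Fin n → ℂ))
    (α : Fin (k - 1)) (i : Fin n) : ℂ :=
  (1 / 2 : ℂ) *
    (((fderiv ℝ F q (Pi.single α ((0 : Fin m → ℝ), Pi.single i (1 : ℂ))) : ℝ) : ℂ)
      - Complex.I *
        ((fderiv ℝ F q (Pi.single α ((0 : Fin m → ℝ), Pi.single i Complex.I)) : ℝ) : ℂ))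

theorem conj_eq_re_sub_im (z : ℂ) : (starRingEnd ℂ) z = (z.re : ℂ) - z.im * Complex.I := by
  apply Complex.ext <;> simp

/-- For `k ≥ 2`, `T₁, …, T_k > 0`, and `1 ≤ i ≤ n`, the operator
`ζ^i = (1/(T₁+⋯+T_k)) Σ_{α=1}^{k−1} T_α ∂/∂w_i^α` (with Wirtinger derivatives)
acts on `G^{(k)}` by `ζ^i(G^{(k)}) = −((Σ_α w̄_i^α)/(4T_k)) · G^{(k)}`. -/
theorem zeta_acts_on_gaussProd (m n k : ℕ) (hk : 2 ≤ k) (T : Fin k → ℝ)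
    (hT : ∀ i, 0 < T i) (i : Fin n)
    (q : Fin (k - 1) → (Fin m → ℝ) × (Fin n → ℂ)) :
    (((∑ γ, T γ : ℝ) : ℂ))⁻¹ *
        ∑ α : Fin (k - 1), (T (Fin.castLE (Nat.sub_le k 1) α) : ℂ) *
          wirtingerDeriv m n k (gaussProd m n k (by omega) T) q α i
      = -((∑ β, (starRingEnd ℂ) ((q β).2 i)) / (4 * (T ⟨k - 1, by omega⟩ : ℂ)))
          * ((gaussProd m n k (by omega) T q : ℝ) : ℂ) := by
  have hk1 : 0 < k := by omega
  set G : ℝ := gaussProd m n k (by omega) T q with hGdef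
  set Tk : ℝ := T ⟨k - 1, by omega⟩ with hTk
  have hTkpos : 0 < Tk := hT _
  have hTkne : (Tk : ℂ) ≠ 0 := by
    simp only [ne_eq, Complex.ofReal_eq_zero]; exact ne_of_gt hTkpos
  set W : ℂ := ∑ β, (q β).2 i with hW
  have hWsum : (∑ β, q β).2 i = W := by
    rw [hW]
    rw [Prod.snd_sum]
    simp [Finset.sum_apply]
  have hwirt : ∀ α : Fin (k - 1),
      wirtingerDeriv m n k (gaussProd m n k (by omega) T) q α i
      = -(G : ℂ) * ((starRingEnd ℂ) ((q α).2 i) / (4 * (T (Fin.castLE (Nat.sub_le k 1) α) : ℂ))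
          + (starRingEnd ℂ) W / (4 * (Tk : ℂ))) := by
    intro α
    unfold wirtingerDeriv
    rw [fderiv_gaussProd m n k (by omega) T q α i 1,
      fderiv_gaussProd m n k (by omega) T q α i Complex.I]
    rw [hWsum]
    simp only [map_one, mul_one, Complex.conj_I, mul_neg, Complex.neg_re, Complex.mul_I_re,
      neg_neg, ← hGdef, ← hTk]
    rw [conj_eq_re_sub_im ((q α).2 i), conj_eq_re_sub_im W]
    push_cast
    have hTα : ((T (Fin.castLE (Nat.sub_le k 1) α) : ℝ) : ℂ) ≠ 0 := by
      simp only [ne_eq, Complex.ofReal_eq_zero]; exact ne_of_gt (hT _)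
    field_simp
    ring
  simp only [hwirt]
  -- split each term and sum
  have hterm : ∀ α : Fin (k - 1),
      (T (Fin.castLE (Nat.sub_le k 1) α) : ℂ) *
        (-(G : ℂ) * ((starRingEnd ℂ) ((q α).2 i) / (4 * (T (Fin.castLE (Nat.sub_le k 1) α) : ℂ))
          + (starRingEnd ℂ) W / (4 * (Tk : ℂ))))
      = (-(G : ℂ) / 4) * (starRingEnd ℂ) ((q α).2 i)
        + (-(G : ℂ) * (starRingEnd ℂ) W / (4 * (Tk : ℂ))) * (T (Fin.castLE (Nat.sub_le k 1) α) : ℂ) := by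
    intro α
    have hTα : ((T (Fin.castLE (Nat.sub_le k 1) α) : ℝ) : ℂ) ≠ 0 := by
      simp only [ne_eq, Complex.ofReal_eq_zero]; exact ne_of_gt (hT _)
    field_simp
    ring
  simp only [hterm]
  rw [Finset.sum_add_distrib, ← Finset.mul_sum,
    ← Finset.mul_sum, ← map_sum (starRingEnd ℂ), ← hW]
  -- split the sum over Fin k
  have hsplit : (∑ γ, T γ) = (∑ α : Fin (k - 1), T (Fin.castLE (Nat.sub_le k 1) α)) + Tk := by
    have he : ∑ γ : Fin k, T γ
        = ∑ γ : Fin (k - 1 + 1), T (finCongr (by omega : k - 1 + 1 = k) γ) :=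
      (Fintype.sum_equiv (finCongr (by omega : k - 1 + 1 = k)) _ T (fun _ => rfl)).symm
    rw [he, Fin.sum_univ_castSucc]
    rfl
  have hsum_ne : ((∑ γ, T γ : ℝ) : ℂ) ≠ 0 := by
    simp only [ne_eq, Complex.ofReal_eq_zero]
    have : 0 < ∑ γ, T γ := Finset.sum_pos (fun γ _ => hT γ) ⟨⟨0, by omega⟩, Finset.mem_univ _⟩
    exact ne_of_gt this
  rw [inv_mul_eq_iff_eq_mul₀ hsum_ne]
  have hcast : ((∑ γ, T γ : ℝ) : ℂ)
      = (∑ α : Fin (k - 1), (T (Fin.castLE (Nat.sub_le k 1) α) : ℂ)) + (Tk : ℂ) := by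
    rw [hsplit]; push_cast; ring
  rw [hcast]
  field_simp
  ring
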